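/- For every finite word w over {0,1,2} and every j in {0,1,2}, one has 0 <= b_j^(w) <= 2/3. Moreover, the infimum of the set { b_j^(w) : w a finite word over {0,1,2}, j in {0,1,2} } equals 0 and its supremum equals 2/3. -/

import Mathlib

open Matrix BigOperators

/-- The matrix `M_0`. -/
noncomputable def M0 : Matrix (Fin 3) (Fin 3) ℝ :=
  (1 / 15 : ℝ) • !![9, 0, 0; 2, 2, -1; 2, -1, 2]

/-- The matrix `M_1`. -/
noncomputable def M1 : Matrix (Fin 3) (Fin 3) ℝ :=
  (1 / 15 : ℝ) • !![2, 2, -1; 0, 9, 0; -1, 2, 2]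

/-- The matrix `M_2`. -/
noncomputable def M2 : Matrix (Fin 3) (Fin 3) ℝ :=
  (1 / 15 : ℝ) • !![2, -1, 2; -1, 2, 2; 0, 0, 9]

/-- `Mmat i` is the matrix `M_i`. -/
noncomputable def Mmat : Fin 3 → Matrix (Fin 3) (Fin 3) ℝ := ![M0, M1, M2]

/-- For a word `w = [w₁, ..., wₘ]`, `Mword w = M_{w₁} * ⋯ * M_{wₘ}`
(the empty word giving the identity matrix). -/
noncomputable def Mword (w : List (Fin 3)) : Matrix (Fin 3) (Fin 3) ℝ :=
  (w.map Mmat).prod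

/-- The `j`-th column `z_j` of `M_w`, as a vector in `ℝ³`. -/
noncomputable def zcol (w : List (Fin 3)) (j : Fin 3) : Fin 3 → ℝ :=
  fun i => Mword w i j

/-- The vector `z = z₀ + z₁ + z₂`, the sum of the columns of `M_w`. -/
noncomputable def zvec (w : List (Fin 3)) : Fin 3 → ℝ :=
  fun i => ∑ j : Fin 3, Mword w i j

/-- `c_j^(w)`, the `j`-th column sum of `M_w`, i.e. the `j`-th entry of `(1,1,1) M_w`. -/
noncomputable def cw (w : List (Fin 3)) (j : Fin 3) : ℝ :=
  ∑ i : Fin 3, Mword w i j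

/-- `S^(w) = c₀^(w) + c₁^(w) + c₂^(w)`, the sum of all entries of `M_w`. -/
noncomputable def Sw (w : List (Fin 3)) : ℝ :=
  ∑ j : Fin 3, cw w j

/-- The weight `b_j^(w) = 1/6 + c_j^(w) / (2 S^(w))`. -/
noncomputable def bwt (w : List (Fin 3)) (j : Fin 3) : ℝ :=
  1 / 6 + cw w j / (2 * Sw w)

/-- Representation of a triple by sums of the quadratics
`q₀ = x²-xy`, `q₁ = y²-xy`, `q₂ = xy` (up to a positive scale). -/
def RepQ (c : Fin 3 → ℝ) : Prop :=
  ∃ x0 x1 x2 y0 y1 y2 t : ℝ, 0 < t ∧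
    c 0 = t * ((x0^2 - x0*y0) + (x1^2 - x1*y1) + (x2^2 - x2*y2)) ∧
    c 1 = t * ((y0^2 - x0*y0) + (y1^2 - x1*y1) + (y2^2 - x2*y2)) ∧
    c 2 = t * (x0*y0 + x1*y1 + x2*y2)

lemma mword_append (w : List (Fin 3)) (i : Fin 3) :
    Mword (w ++ [i]) = Mword w * Mmat i := by simp [Mword]

lemma cw_nil (k : Fin 3) : cw ([] : List (Fin 3)) k = 1 := by
  fin_cases k <;> simp [cw, Mword, Fin.sum_univ_three, Matrix.one_apply]

lemma cw_append (w : List (Fin 3)) (i k : Fin 3) :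
    cw (w ++ [i]) k =
      cw w 0 * Mmat i 0 k + cw w 1 * Mmat i 1 k + cw w 2 * Mmat i 2 k := by
  simp only [cw, mword_append, Matrix.mul_apply, Fin.sum_univ_three]
  ring

lemma repq_cw (w : List (Fin 3)) : RepQ (cw w) := by
  induction w using List.reverseRecOn with
  | nil =>
    refine ⟨1, 0, 1, 0, 1, 1, 1, one_pos, ?_, ?_, ?_⟩ <;> simp [cw_nil]
  | append_singleton w i ih =>
    obtain ⟨x0, x1, x2, y0, y1, y2, t, ht, h0, h1, h2⟩ := ih
    fin_cases i
    · exact ⟨3*x0 - y0, 3*x1 - y1, 3*x2 - y2, y0, y1, y2, t/15, by linarith,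
        by rw [cw_append, h0, h1, h2]; norm_num [Mmat, M0, Matrix.vecHead, Matrix.vecTail, Matrix.cons_val_two]; ring,
        by rw [cw_append, h0, h1, h2]; norm_num [Mmat, M0, Matrix.vecHead, Matrix.vecTail, Matrix.cons_val_two]; ring,
        by rw [cw_append, h0, h1, h2]; norm_num [Mmat, M0, Matrix.vecHead, Matrix.vecTail, Matrix.cons_val_two]; ring⟩
    · exact ⟨x0, x1, x2, 3*y0 - x0, 3*y1 - x1, 3*y2 - x2, t/15, by linarith,
        by rw [cw_append, h0, h1, h2]; norm_num [Mmat, M1, Matrix.vecHead, Matrix.vecTail, Matrix.cons_val_two]; ring,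
        by rw [cw_append, h0, h1, h2]; norm_num [Mmat, M1, Matrix.vecHead, Matrix.vecTail, Matrix.cons_val_two]; ring,
        by rw [cw_append, h0, h1, h2]; norm_num [Mmat, M1, Matrix.vecHead, Matrix.vecTail, Matrix.cons_val_two]; ring⟩
    · exact ⟨2*x0 + y0, 2*x1 + y1, 2*x2 + y2, x0 + 2*y0, x1 + 2*y1, x2 + 2*y2, t/15,
        by linarith,
        by rw [cw_append, h0, h1, h2]; norm_num [Mmat, M2, Matrix.vecHead, Matrix.vecTail, Matrix.cons_val_two]; ring,
        by rw [cw_append, h0, h1, h2]; norm_num [Mmat, M2, Matrix.vecHead, Matrix.vecTail, Matrix.cons_val_two]; ring,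
        by rw [cw_append, h0, h1, h2]; norm_num [Mmat, M2, Matrix.vecHead, Matrix.vecTail, Matrix.cons_val_two]; ring⟩

lemma bwt_aux {c S : ℝ} (h1 : 0 ≤ S - c) (h2 : 0 ≤ 3*c + S) :
    0 ≤ 1/6 + c/(2*S) ∧ 1/6 + c/(2*S) ≤ 2/3 := by
  have hS : 0 ≤ S := by linarith
  rcases hS.eq_or_lt with h | h
  · have hc : c = 0 := by linarith
    rw [hc]; norm_num
  · have h2S : 0 < 2*S := by linarith
    constructor
    · have : -(1/6) ≤ c/(2*S) := by rw [le_div_iff₀ h2S]; linarith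
      linarith
    · have : c/(2*S) ≤ 1/2 := by rw [div_le_iff₀ h2S]; linarith
      linarith

lemma Sw_eq (w : List (Fin 3)) : Sw w = cw w 0 + cw w 1 + cw w 2 := by
  simp [Sw, Fin.sum_univ_three]

set_option maxHeartbeats 2000000 in
lemma bwt_bounds (w : List (Fin 3)) (j : Fin 3) :
    0 ≤ bwt w j ∧ bwt w j ≤ 2/3 := by
  obtain ⟨x0, x1, x2, y0, y1, y2, t, ht, h0, h1, h2⟩ := repq_cw w
  have hS := Sw_eq w
  have q0 := mul_nonneg ht.le (sq_nonneg y0)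
  have q1 := mul_nonneg ht.le (sq_nonneg y1)
  have q2 := mul_nonneg ht.le (sq_nonneg y2)
  have p0 := mul_nonneg ht.le (sq_nonneg x0)
  have p1 := mul_nonneg ht.le (sq_nonneg x1)
  have p2 := mul_nonneg ht.le (sq_nonneg x2)
  have d0 := mul_nonneg ht.le (sq_nonneg (x0 - y0))
  have d1 := mul_nonneg ht.le (sq_nonneg (x1 - y1))
  have d2 := mul_nonneg ht.le (sq_nonneg (x2 - y2))
  have a0 := mul_nonneg ht.le (sq_nonneg (2*x0 - y0))
  have a1 := mul_nonneg ht.le (sq_nonneg (2*x1 - y1))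
  have a2 := mul_nonneg ht.le (sq_nonneg (2*x2 - y2))
  have b0 := mul_nonneg ht.le (sq_nonneg (x0 - 2*y0))
  have b1 := mul_nonneg ht.le (sq_nonneg (x1 - 2*y1))
  have b2 := mul_nonneg ht.le (sq_nonneg (x2 - 2*y2))
  have s0 := mul_nonneg ht.le (sq_nonneg (x0 + y0))
  have s1 := mul_nonneg ht.le (sq_nonneg (x1 + y1))
  have s2 := mul_nonneg ht.le (sq_nonneg (x2 + y2))
  have key0 : 0 ≤ Sw w - cw w 0 ∧ 0 ≤ 3 * cw w 0 + Sw w := ⟨by nlinarith, by nlinarith⟩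
  have key1 : 0 ≤ Sw w - cw w 1 ∧ 0 ≤ 3 * cw w 1 + Sw w := ⟨by nlinarith, by nlinarith⟩
  have key2 : 0 ≤ Sw w - cw w 2 ∧ 0 ≤ 3 * cw w 2 + Sw w := ⟨by nlinarith, by nlinarith⟩
  simp only [bwt]
  fin_cases j
  · exact bwt_aux key0.1 key0.2
  · exact bwt_aux key1.1 key1.2
  · exact bwt_aux key2.1 key2.2
lemma cwA (m : ℕ) :
    cw (List.replicate m (0:Fin 3)) 0 = (3*(3/5:ℝ)^m - (1/15:ℝ)^m)/2 ∧
    cw (List.replicate m (0:Fin 3)) 1 = (1/15:ℝ)^m ∧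
    cw (List.replicate m (0:Fin 3)) 2 = (1/15:ℝ)^m := by
  induction m with
  | zero => norm_num [cw_nil]
  | succ n ih =>
    obtain ⟨h0, h1, h2⟩ := ih
    rw [List.replicate_succ']
    refine ⟨?_, ?_, ?_⟩ <;>
    · rw [cw_append, h0, h1, h2]
      norm_num [Mmat, M0, Matrix.vecHead, Matrix.vecTail, Matrix.cons_val_two]
      first
      | ring
      | (rw [pow_succ, pow_succ]; ring)
lemma bwtA (m : ℕ) :
    bwt (List.replicate m (0:Fin 3)) 0
      = 1/6 + (3 - (1/9:ℝ)^m)/(6*(1+(1/9:ℝ)^m)) := by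
  obtain ⟨h0, h1, h2⟩ := cwA m
  have ha : (0:ℝ) < (3/5:ℝ)^m := by positivity
  have hrr : (0:ℝ) < (1/9:ℝ)^m := by positivity
  have he : (1/15:ℝ)^m = (3/5:ℝ)^m * (1/9:ℝ)^m := by
    rw [← mul_pow]; norm_num
  set a := (3/5:ℝ)^m with hadef
  set r := (1/9:ℝ)^m with hrdef
  have hc0 : cw (List.replicate m (0:Fin 3)) 0 = (3*a - a*r)/2 := by rw [h0, he]
  have hc1 : cw (List.replicate m (0:Fin 3)) 1 = a*r := by rw [h1, he]
  have hc2 : cw (List.replicate m (0:Fin 3)) 2 = a*r := by rw [h2, he]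
  have hS : Sw (List.replicate m (0:Fin 3)) = 3*a*(1+r)/2 := by
    rw [Sw_eq, hc0, hc1, hc2]; ring
  simp only [bwt, hc0, hS]
  rw [show (2:ℝ) * (3*a*(1+r)/2) = 3*a*(1+r) by ring]
  congr 1
  rw [div_eq_div_iff (by positivity) (by positivity)]
  ring

lemma bwtB (m : ℕ) :
    bwt (List.replicate m (0:Fin 3) ++ [1]) 2
      = 1/6 + (5*(1/9:ℝ)^m - 3)/(2*(9 + 21*(1/9:ℝ)^m)) := by
  obtain ⟨h0, h1, h2⟩ := cwA m
  have ha : (0:ℝ) < (3/5:ℝ)^m := by positivity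
  have hrr : (0:ℝ) < (1/9:ℝ)^m := by positivity
  have he : (1/15:ℝ)^m = (3/5:ℝ)^m * (1/9:ℝ)^m := by
    rw [← mul_pow]; norm_num
  set a := (3/5:ℝ)^m with hadef
  set r := (1/9:ℝ)^m with hrdef
  have hc0 : cw (List.replicate m (0:Fin 3)) 0 = (3*a - a*r)/2 := by rw [h0, he]
  have hc1 : cw (List.replicate m (0:Fin 3)) 1 = a*r := by rw [h1, he]
  have hc2 : cw (List.replicate m (0:Fin 3)) 2 = a*r := by rw [h2, he]
  have k0 : cw (List.replicate m (0:Fin 3) ++ [1]) 0 = (6*a - 4*a*r)/30 := by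
    rw [cw_append, hc0, hc1, hc2]
    norm_num [Mmat, M1, Matrix.vecHead, Matrix.vecTail, Matrix.cons_val_two]
    ring
  have k1 : cw (List.replicate m (0:Fin 3) ++ [1]) 1 = (6*a + 20*a*r)/30 := by
    rw [cw_append, hc0, hc1, hc2]
    norm_num [Mmat, M1, Matrix.vecHead, Matrix.vecTail, Matrix.cons_val_two]
    ring
  have k2 : cw (List.replicate m (0:Fin 3) ++ [1]) 2 = (5*a*r - 3*a)/30 := by
    rw [cw_append, hc0, hc1, hc2]
    norm_num [Mmat, M1, Matrix.vecHead, Matrix.vecTail, Matrix.cons_val_two]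
    ring
  have hS : Sw (List.replicate m (0:Fin 3) ++ [1]) = a*(9 + 21*r)/30 := by
    rw [Sw_eq, k0, k1, k2]; ring
  simp only [bwt, k2, hS]
  rw [show (2:ℝ) * (a*(9 + 21*r)/30) = a*(9 + 21*r)/15 by ring]
  congr 1
  rw [div_eq_div_iff (by positivity) (by positivity)]
  ring

/-- Every weight satisfies `0 ≤ b_j^(w) ≤ 2/3`; moreover the infimum of the set of
all weights is `0` and its supremum is `2/3`. -/
theorem stmt_14 :
    (∀ (w : List (Fin 3)) (j : Fin 3), 0 ≤ bwt w j ∧ bwt w j ≤ 2 / 3) ∧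
    sInf {x : ℝ | ∃ (w : List (Fin 3)) (j : Fin 3), bwt w j = x} = 0 ∧
    sSup {x : ℝ | ∃ (w : List (Fin 3)) (j : Fin 3), bwt w j = x} = 2 / 3 := by
  have hne : {x : ℝ | ∃ (w : List (Fin 3)) (j : Fin 3), bwt w j = x}.Nonempty :=
    ⟨bwt [] 0, [], 0, rfl⟩
  have hbdd_below : BddBelow {x : ℝ | ∃ (w : List (Fin 3)) (j : Fin 3), bwt w j = x} := by
    refine ⟨0, ?_⟩
    rintro x ⟨w, j, rfl⟩
    exact (bwt_bounds w j).1
  have hbdd_above : BddAbove {x : ℝ | ∃ (w : List (Fin 3)) (j : Fin 3), bwt w j = x} := by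
    refine ⟨2/3, ?_⟩
    rintro x ⟨w, j, rfl⟩
    exact (bwt_bounds w j).2
  have hr : Filter.Tendsto (fun m : ℕ => (1/9:ℝ)^m) Filter.atTop (nhds 0) :=
    tendsto_pow_atTop_nhds_zero_of_lt_one (by norm_num) (by norm_num)
  have hA : Filter.Tendsto (fun m : ℕ => bwt (List.replicate m (0:Fin 3)) 0)
      Filter.atTop (nhds (2/3)) := by
    have h1 : Filter.Tendsto (fun m : ℕ => 1/6 + (3 - (1/9:ℝ)^m)/(6*(1+(1/9:ℝ)^m)))
        Filter.atTop (nhds (1/6 + (3 - 0)/(6*(1+(0:ℝ))))) :=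
      tendsto_const_nhds.add ((tendsto_const_nhds.sub hr).div
        ((tendsto_const_nhds.add hr).const_mul 6) (by norm_num))
    norm_num at h1
    simpa only [← bwtA] using h1
  have hB : Filter.Tendsto (fun m : ℕ => bwt (List.replicate m (0:Fin 3) ++ [1]) 2)
      Filter.atTop (nhds 0) := by
    have h1 : Filter.Tendsto (fun m : ℕ => 1/6 + (5*(1/9:ℝ)^m - 3)/(2*(9 + 21*(1/9:ℝ)^m)))
        Filter.atTop (nhds (1/6 + (5*0 - 3)/(2*(9 + 21*(0:ℝ))))) :=
      tendsto_const_nhds.add (((hr.const_mul 5).sub tendsto_const_nhds).div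
        ((hr.const_mul 21).const_add 9 |>.const_mul 2) (by norm_num))
    norm_num at h1
    simpa only [← bwtB] using h1
  refine ⟨bwt_bounds, ?_, ?_⟩
  · refine le_antisymm ?_ ?_
    · exact ge_of_tendsto' hB fun m => csInf_le hbdd_below ⟨_, _, rfl⟩
    · refine le_csInf hne ?_
      rintro x ⟨w, j, rfl⟩
      exact (bwt_bounds w j).1
  · refine le_antisymm ?_ ?_
    · refine csSup_le hne ?_
      rintro x ⟨w, j, rfl⟩
      exact (bwt_bounds w j).2
    · exact le_of_tendsto' hA fun m => le_csSup hbdd_above ⟨_, _, rfl⟩
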